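/- arXiv:1104.0270 — 2 statements merged into one kernel-verified Lean document; each statement's English description precedes it below -/
import Mathlib

section
/- Work in six-dimensional Euclidean space ℝ^6, and let Δ denote the Laplacian (the trace of the Hessian). Let 0 ≤ σ < 4 and R > 1. Let u : ℝ^6 → ℝ be continuous on the closed annulus {x : 1 ≤ ‖x‖ ≤ R}, twice continuously differentiable on the open annulus {x : 1 < ‖x‖ < R}, and satisfy Δu(x) + σ‖x‖^{-2}·u(x) ≥ 0 for all x in the open annulus. If u(x) ≤ 0 whenever ‖x‖ = 1 and whenever ‖x‖ = R, then u(x) ≤ 0 for every x in the closed annulus. -/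
open Filter Topology

/-- Second derivative test: at a local max, the second derivative is nonpositive. -/
lemma secondDeriv_nonpos_of_isLocalMax {G G' : ℝ → ℝ} {b : ℝ}
    (hmax : IsLocalMax G 0)
    (hd : ∀ᶠ t in 𝓝 (0:ℝ), HasDerivAt G (G' t) t)
    (hd2 : HasDerivAt G' b 0) : b ≤ 0 := by
  by_contra hb
  push_neg at hb
  have hG'0 : G' 0 = 0 := hmax.hasDerivAt_eq_zero hd.self_of_nhds
  -- slope of G' tends to b > 0, so G' t > 0 for small t > 0
  have hslope : Tendsto (slope G' 0) (𝓝[≠] (0:ℝ)) (𝓝 b) :=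
    hasDerivAt_iff_tendsto_slope.mp hd2
  have hpos : ∀ᶠ t in 𝓝[≠] (0:ℝ), 0 < slope G' 0 t :=
    hslope.eventually (eventually_gt_nhds hb)
  -- extract δ
  obtain ⟨δ₁, hδ₁, hP⟩ := Metric.eventually_nhds_iff.mp (eventually_nhdsWithin_iff.mp hpos)
  obtain ⟨δ₂, hδ₂, hQ⟩ := Metric.eventually_nhds_iff.mp (hmax.and hd)
  set δ := min δ₁ δ₂ / 2 with hδdef
  have hδpos : 0 < δ := by positivity
  have hδ1 : δ < δ₁ := by
    have := min_le_left δ₁ δ₂; simp only [hδdef]; cases' lt_or_ge δ₁ δ₂ with h h <;> nlinarith [lt_min hδ₁ hδ₂]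
  have hδ2 : δ < δ₂ := by
    simp only [hδdef]; nlinarith [min_le_right δ₁ δ₂, lt_min hδ₁ hδ₂]
  -- G strictly monotone on [0, δ]
  have hmono : StrictMonoOn G (Set.Icc 0 δ) := by
    apply strictMonoOn_of_deriv_pos (convex_Icc 0 δ)
    · intro t ht
      have : dist t 0 < δ₂ := by
        rw [Real.dist_eq, sub_zero, abs_of_nonneg ht.1]; exact lt_of_le_of_lt ht.2 hδ2
      exact ((hQ this).2).continuousAt.continuousWithinAt
    · intro t ht
      rw [interior_Icc] at ht
      have hdist2 : dist t 0 < δ₂ := by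
        rw [Real.dist_eq, sub_zero, abs_of_pos ht.1]; exact lt_trans ht.2 hδ2
      have hdist1 : dist t 0 < δ₁ := by
        rw [Real.dist_eq, sub_zero, abs_of_pos ht.1]; exact lt_trans ht.2 hδ1
      have hder : deriv G t = G' t := (hQ hdist2).2.deriv
      have hsl := hP hdist1 (by simp [ne_of_gt ht.1])
      rw [slope_def_field, hG'0] at hsl
      have : 0 < G' t := by
        have h2 : 0 < (G' t - 0) / (t - 0) := by simpa [div_sub_div_same] using hsl
        rw [sub_zero, sub_zero] at h2
        exact (div_pos_iff.mp h2).resolve_right (fun h => absurd ht.1 (not_lt.mpr h.2.le)) |>.1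
      rwa [hder]
  have hlt : G 0 < G δ := hmono (Set.left_mem_Icc.mpr hδpos.le) (Set.right_mem_Icc.mpr hδpos.le) hδpos
  have hle : G δ ≤ G 0 := by
    have : dist δ 0 < δ₂ := by rw [Real.dist_eq, sub_zero, abs_of_pos hδpos]; exact hδ2
    exact (hQ this).1
  linarith

variable {E : Type*} [NormedAddCommGroup E] [NormedSpace ℝ E]

lemma line_hasDerivAt (u : E → ℝ) {s : Set E} (hs : IsOpen s) (hC2 : ContDiffOn ℝ 2 u s)
    {x : E} (hx : x ∈ s) (v : E) :
    HasDerivAt (fun t : ℝ => u (x + t • v)) (fderiv ℝ u (x + (0:ℝ) • v) v) 0 := by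
  have hL : HasDerivAt (fun t : ℝ => x + t • v) v 0 := by
    simpa using ((hasDerivAt_id (0:ℝ)).smul_const v).const_add x
  have hmem : x + (0:ℝ) • v ∈ s := by simpa using hx
  have hu : DifferentiableAt ℝ u (x + (0:ℝ) • v) :=
    (hC2.contDiffAt (hs.mem_nhds hmem)).differentiableAt (by norm_num)
  exact hu.hasFDerivAt.comp_hasDerivAt 0 hL

lemma line_hasDerivAt_all (u : E → ℝ) {s : Set E} (hs : IsOpen s) (hC2 : ContDiffOn ℝ 2 u s)
    {x : E} (hx : x ∈ s) (v : E) :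
    ∀ᶠ t in 𝓝 (0:ℝ), HasDerivAt (fun t : ℝ => u (x + t • v)) (fderiv ℝ u (x + t • v) v) t := by
  have hcont : Continuous (fun t : ℝ => x + t • v) := by continuity
  have hmem : ∀ᶠ t in 𝓝 (0:ℝ), x + t • v ∈ s := by
    have : (fun t : ℝ => x + t • v) 0 ∈ s := by simpa using hx
    exact hcont.continuousAt.eventually_mem (hs.mem_nhds this)
  filter_upwards [hmem] with t ht
  have hL : HasDerivAt (fun t : ℝ => x + t • v) v t := by
    simpa using ((hasDerivAt_id t).smul_const v).const_add x
  have hu : DifferentiableAt ℝ u (x + t • v) :=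
    (hC2.contDiffAt (hs.mem_nhds ht)).differentiableAt (by norm_num)
  exact hu.hasFDerivAt.comp_hasDerivAt t hL

lemma line_hasDerivAt2 (u : E → ℝ) {s : Set E} (hs : IsOpen s) (hC2 : ContDiffOn ℝ 2 u s)
    {x : E} (hx : x ∈ s) (v : E) :
    HasDerivAt (fun t : ℝ => fderiv ℝ u (x + t • v) v)
      (fderiv ℝ (fderiv ℝ u) x v v) 0 := by
  have hL : HasDerivAt (fun t : ℝ => x + t • v) v 0 := by
    simpa using ((hasDerivAt_id (0:ℝ)).smul_const v).const_add x
  have hC1 : ContDiffAt ℝ 1 (fderiv ℝ u) x :=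
    (hC2.contDiffAt (hs.mem_nhds hx)).fderiv_right (by norm_num)
  have hdf : DifferentiableAt ℝ (fderiv ℝ u) x := hC1.differentiableAt (by norm_num)
  have hdf' : HasFDerivAt (fderiv ℝ u) (fderiv ℝ (fderiv ℝ u) x) (x + (0:ℝ) • v) := by
    simpa using hdf.hasFDerivAt
  have h1 : HasDerivAt (fun t : ℝ => fderiv ℝ u (x + t • v)) (fderiv ℝ (fderiv ℝ u) x v) 0 :=
    hdf'.comp_hasDerivAt 0 hL
  have := h1.clm_apply (hasDerivAt_const 0 v)
  simpa using this

/-- The Laplacian on `ℝ⁶`: the trace of the Hessian. -/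
noncomputable def laplacian (f : EuclideanSpace ℝ (Fin 6) → ℝ)
    (x : EuclideanSpace ℝ (Fin 6)) : ℝ :=
  ∑ i : Fin 6,
    iteratedFDeriv ℝ 2 f x ![EuclideanSpace.single i 1, EuclideanSpace.single i 1]


set_option maxHeartbeats 1000000 in
open RealInnerProductSpace in
/-- Maximum principle for `Δ + σ r⁻²` (with `0 ≤ σ < 4`) on the annulus
`1 ≤ ‖x‖ ≤ R` in `ℝ⁶`: a subsolution which is `≤ 0` on both boundary spheres
is `≤ 0` throughout. -/
theorem annulus_maximum_principle (σ R : ℝ) (hσ0 : 0 ≤ σ) (hσ4 : σ < 4) (hR : 1 < R)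
    (u : EuclideanSpace ℝ (Fin 6) → ℝ)
    (hcont : ContinuousOn u {x | 1 ≤ ‖x‖ ∧ ‖x‖ ≤ R})
    (hC2 : ContDiffOn ℝ 2 u {x | 1 < ‖x‖ ∧ ‖x‖ < R})
    (hsub : ∀ x : EuclideanSpace ℝ (Fin 6), 1 < ‖x‖ → ‖x‖ < R →
      0 ≤ laplacian u x + σ * ‖x‖ ^ (-2 : ℝ) * u x)
    (hb1 : ∀ x : EuclideanSpace ℝ (Fin 6), ‖x‖ = 1 → u x ≤ 0)
    (hbR : ∀ x : EuclideanSpace ℝ (Fin 6), ‖x‖ = R → u x ≤ 0) :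
    ∀ x : EuclideanSpace ℝ (Fin 6), 1 ≤ ‖x‖ → ‖x‖ ≤ R → u x ≤ 0 := by
  classical
  set A : Set (EuclideanSpace ℝ (Fin 6)) := {x | 1 ≤ ‖x‖ ∧ ‖x‖ ≤ R} with hA
  set S : Set (EuclideanSpace ℝ (Fin 6)) := {x | 1 < ‖x‖ ∧ ‖x‖ < R} with hS
  have hSopen : IsOpen S := by
    have : S = (fun x : EuclideanSpace ℝ (Fin 6) => ‖x‖) ⁻¹' (Set.Ioo 1 R) := rfl
    rw [this]; exact isOpen_Ioo.preimage continuous_norm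
  have hSA : S ⊆ A := fun x hx => ⟨hx.1.le, hx.2.le⟩
  have hAclosed : IsClosed A := by
    have : A = (fun x : EuclideanSpace ℝ (Fin 6) => ‖x‖) ⁻¹' (Set.Icc 1 R) := rfl
    rw [this]; exact isClosed_Icc.preimage continuous_norm
  have hAcompact : IsCompact A := by
    refine (isCompact_closedBall (0 : EuclideanSpace ℝ (Fin 6)) R).of_isClosed_subset hAclosed ?_
    intro x hx; simpa [Metric.mem_closedBall, dist_eq_norm] using hx.2
  have hAne : A.Nonempty := by
    refine ⟨EuclideanSpace.single 0 1, ?_, ?_⟩ <;>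
      simp [EuclideanSpace.norm_single, hR.le]
  have hhcont : ContinuousOn (fun x : EuclideanSpace ℝ (Fin 6) => u x * ‖x‖ ^ 2) A :=
    hcont.mul ((continuous_norm.pow 2).continuousOn)
  obtain ⟨x₀, hx₀A, hx₀max⟩ := hAcompact.exists_isMaxOn hAne hhcont
  by_cases hpos : u x₀ * ‖x₀‖ ^ 2 ≤ 0
  · intro x hx1 hxR
    have hxA : x ∈ A := ⟨hx1, hxR⟩
    have hle : u x * ‖x‖ ^ 2 ≤ u x₀ * ‖x₀‖ ^ 2 := hx₀max hxA
    have hn : (0:ℝ) < ‖x‖ ^ 2 := by positivity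
    nlinarith
  · exfalso
    push_neg at hpos
    have hx₀S : x₀ ∈ S := by
      rcases lt_or_eq_of_le hx₀A.1 with h1 | h1
      · rcases lt_or_eq_of_le hx₀A.2 with h2 | h2
        · exact ⟨h1, h2⟩
        · exact absurd hpos (not_lt.mpr (by nlinarith [hbR x₀ h2, sq_nonneg ‖x₀‖]))
      · exact absurd hpos (not_lt.mpr (by nlinarith [hb1 x₀ h1.symm, sq_nonneg ‖x₀‖]))
    obtain ⟨hr1, hrR⟩ := hx₀S
    have hr0 : (0:ℝ) < ‖x₀‖ := lt_trans one_pos hr1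
    have hu0 : 0 < u x₀ := by nlinarith [sq_nonneg ‖x₀‖]
    set e : Fin 6 → EuclideanSpace ℝ (Fin 6) := fun i => EuclideanSpace.single i (1:ℝ)
      with hedef
    set d : Fin 6 → ℝ := fun i => fderiv ℝ u x₀ (e i) with hddef
    set c : Fin 6 → ℝ := fun i => fderiv ℝ (fderiv ℝ u) x₀ (e i) (e i) with hcdef
    have hnorm : ∀ (i : Fin 6) (t : ℝ),
        ‖x₀ + t • e i‖ ^ 2 = ‖x₀‖ ^ 2 + 2 * x₀ i * t + t ^ 2 := by
      intro i t
      rw [norm_add_sq_real]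
      have h1 : ⟪x₀, t • e i⟫ = t * x₀ i := by
        rw [real_inner_smul_right]
        simp [hedef, EuclideanSpace.inner_single_right]
      have h2 : ‖t • e i‖ ^ 2 = t ^ 2 := by
        rw [norm_smul]
        simp [hedef, EuclideanSpace.norm_single, mul_pow, sq_abs]
      rw [h1, h2]; ring
    have hsumsq : ∑ i : Fin 6, (x₀ i) ^ 2 = ‖x₀‖ ^ 2 := by
      rw [← real_inner_self_eq_norm_sq, PiLp.inner_apply]
      simp [RCLike.inner_apply, sq]
    have key : ∀ i : Fin 6,
        (d i * ‖x₀‖ ^ 2 + 2 * u x₀ * x₀ i = 0) ∧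
        (c i * ‖x₀‖ ^ 2 + 4 * x₀ i * d i + 2 * u x₀ ≤ 0) := by
      intro i
      simp only [hddef, hcdef]
      have hx₀S' : x₀ ∈ S := ⟨hr1, hrR⟩
      have hLcont : Continuous (fun t : ℝ => x₀ + t • e i) := by continuity
      have hmemS : ∀ᶠ t in nhds (0:ℝ), x₀ + t • e i ∈ S := by
        apply hLcont.continuousAt.eventually_mem
        apply hSopen.mem_nhds
        simpa using hx₀S'
      have hq : ∀ t : ℝ, HasDerivAt (fun t : ℝ => ‖x₀‖ ^ 2 + 2 * x₀ i * t + t ^ 2)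
          (2 * x₀ i + 2 * t) t := by
        intro t
        have h1 := (((hasDerivAt_id t).const_mul (2 * x₀ i)).const_add (‖x₀‖ ^ 2)).add
          (hasDerivAt_pow 2 t)
        exact h1.congr_deriv (by norm_num)
      have hq2 : ∀ t : ℝ, HasDerivAt (fun t : ℝ => 2 * x₀ i + 2 * t) 2 t := by
        intro t
        simpa using ((hasDerivAt_id t).const_mul (2:ℝ)).const_add (2 * x₀ i)
      have hd : ∀ᶠ t in nhds (0:ℝ), HasDerivAt
          (fun t : ℝ => u (x₀ + t • e i) * (‖x₀‖ ^ 2 + 2 * x₀ i * t + t ^ 2))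
          (fderiv ℝ u (x₀ + t • e i) (e i) * (‖x₀‖ ^ 2 + 2 * x₀ i * t + t ^ 2)
            + u (x₀ + t • e i) * (2 * x₀ i + 2 * t)) t := by
        filter_upwards [line_hasDerivAt_all u hSopen hC2 hx₀S' (e i)] with t ht
        exact ht.mul (hq t)
      have hmax : IsLocalMax
          (fun t : ℝ => u (x₀ + t • e i) * (‖x₀‖ ^ 2 + 2 * x₀ i * t + t ^ 2)) 0 := by
        filter_upwards [hmemS] with t ht
        have h1 : u (x₀ + t • e i) * (‖x₀‖ ^ 2 + 2 * x₀ i * t + t ^ 2)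
            = u (x₀ + t • e i) * ‖x₀ + t • e i‖ ^ 2 := by rw [hnorm]
        have h2 := hx₀max (hSA ht)
        rw [h1]
        simpa using h2
      have hfirst := hmax.hasDerivAt_eq_zero hd.self_of_nhds
      have heq1 : fderiv ℝ u x₀ (e i) * ‖x₀‖ ^ 2 + 2 * u x₀ * x₀ i = 0 := by
        simp only [zero_smul, add_zero, mul_zero, zero_pow, ne_eq, OfNat.ofNat_ne_zero,
          not_false_eq_true] at hfirst
        linarith
      refine ⟨heq1, ?_⟩
      have hf0 : HasDerivAt (fun t : ℝ => u (x₀ + t • e i))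
          (fderiv ℝ u (x₀ + (0:ℝ) • e i) (e i)) 0 :=
        line_hasDerivAt u hSopen hC2 hx₀S' (e i)
      have hf'0 : HasDerivAt (fun t : ℝ => fderiv ℝ u (x₀ + t • e i) (e i))
          (fderiv ℝ (fderiv ℝ u) x₀ (e i) (e i)) 0 :=
        line_hasDerivAt2 u hSopen hC2 hx₀S' (e i)
      have hd2 := (hf'0.mul (hq 0)).add (hf0.mul (hq2 0))
      have hb := secondDeriv_nonpos_of_isLocalMax hmax hd hd2
      simp only [zero_smul, add_zero, mul_zero, zero_pow, ne_eq, OfNat.ofNat_ne_zero,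
        not_false_eq_true] at hb
      nlinarith [heq1, hb]
    have hsum : ∑ i : Fin 6, (c i * ‖x₀‖ ^ 2 + 4 * x₀ i * d i + 2 * u x₀) ≤ 0 :=
      Finset.sum_nonpos fun i _ => (key i).2
    have hxd : ∑ i : Fin 6, x₀ i * d i = -2 * u x₀ := by
      have hr2 : (‖x₀‖:ℝ) ^ 2 ≠ 0 := by positivity
      have step : ∀ i : Fin 6, x₀ i * d i = -(2 * u x₀) / ‖x₀‖ ^ 2 * (x₀ i) ^ 2 := by
        intro i
        have h1 := (key i).1
        rw [div_mul_eq_mul_div, eq_div_iff hr2]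
        linear_combination x₀ i * h1
      rw [Finset.sum_congr rfl (fun i _ => step i), ← Finset.mul_sum, hsumsq]
      field_simp
    have hlap : ∑ i : Fin 6, c i = laplacian u x₀ := by
      unfold laplacian
      refine Finset.sum_congr rfl fun i _ => ?_
      rw [iteratedFDeriv_two_apply]
      simp [hcdef, hedef]
    have hΔ : laplacian u x₀ * ‖x₀‖ ^ 2 + 4 * u x₀ ≤ 0 := by
      have expand : ∑ i : Fin 6, (c i * ‖x₀‖ ^ 2 + 4 * x₀ i * d i + 2 * u x₀)
          = (∑ i : Fin 6, c i) * ‖x₀‖ ^ 2 + 4 * (∑ i : Fin 6, x₀ i * d i) + 12 * u x₀ := by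
        have e1 : ∀ i : Fin 6, c i * ‖x₀‖ ^ 2 + 4 * x₀ i * d i + 2 * u x₀
            = c i * ‖x₀‖ ^ 2 + 4 * (x₀ i * d i) + 2 * u x₀ := fun i => by ring
        simp only [e1, Finset.sum_add_distrib, ← Finset.sum_mul, ← Finset.mul_sum,
          Finset.sum_const, Finset.card_univ, Fintype.card_fin, nsmul_eq_mul]
        ring
      rw [expand, hlap, hxd] at hsum
      linarith
    have hrpow : (‖x₀‖:ℝ) ^ (-2 : ℝ) = (‖x₀‖ ^ 2)⁻¹ := by
      rw [Real.rpow_neg hr0.le, ← Real.rpow_natCast ‖x₀‖ 2]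
      norm_num
    have hsub' := hsub x₀ hr1 hrR
    rw [hrpow] at hsub'
    have hr2 : (0:ℝ) < ‖x₀‖ ^ 2 := by positivity
    have hfin : 0 ≤ laplacian u x₀ * ‖x₀‖ ^ 2 + σ * u x₀ := by
      have hmul := mul_le_mul_of_nonneg_right hsub' hr2.le
      calc (0:ℝ) = 0 * ‖x₀‖ ^ 2 := by ring
      _ ≤ (laplacian u x₀ + σ * (‖x₀‖ ^ 2)⁻¹ * u x₀) * ‖x₀‖ ^ 2 := by
          simpa using hmul
      _ = laplacian u x₀ * ‖x₀‖ ^ 2 + σ * u x₀ := by field_simp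
    nlinarith
end

section
/- Work in six-dimensional Euclidean space ℝ^6, and let Δ denote the Laplacian (the trace of the Hessian). Let f : ℝ^6 \ {0} → ℝ be a nonnegative twice continuously differentiable function that is homogeneous of degree -2 (i.e. f(t•x) = t^{-2}·f(x) for all t > 0 and x ≠ 0) and satisfies the differential inequality Δf(x) ≥ -f(x)^2 for all x ≠ 0. Let m be the maximum value of f on the unit sphere {x : ‖x‖ = 1}. Then 4m ≤ m^2; in particular either m = 0 (so f ≡ 0) or m ≥ 4. -/
open Filter Set


/-- Second derivative test: if `φ` has local max at `0`, derivative `D` near `0`,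
and `D` has derivative `c` at `0`, then `c ≤ 0`. -/
lemma second_deriv_nonpos_of_isLocalMax {φ D : ℝ → ℝ} {c : ℝ}
    (hD : ∀ᶠ t in nhds (0:ℝ), HasDerivAt φ (D t) t)
    (hc : HasDerivAt D c 0)
    (hmax : IsLocalMax φ 0) : c ≤ 0 := by
  by_contra hpos
  push_neg at hpos
  have hD0 : D 0 = 0 := hmax.hasDerivAt_eq_zero hD.self_of_nhds
  have hslope : Tendsto (slope D 0) (nhdsWithin 0 {(0:ℝ)}ᶜ) (nhds c) :=
    hasDerivAt_iff_tendsto_slope.1 hc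
  have hev : ∀ᶠ t in nhdsWithin 0 {(0:ℝ)}ᶜ, c / 2 < slope D 0 t :=
    hslope.eventually (eventually_gt_nhds (half_lt_self hpos))
  have hevpos : ∀ᶠ t in nhdsWithin (0:ℝ) (Set.Ioi 0), 0 < D t := by
    have hmono : nhdsWithin (0:ℝ) (Set.Ioi 0) ≤ nhdsWithin 0 {(0:ℝ)}ᶜ :=
      nhdsWithin_mono 0 (fun x hx => ne_of_gt hx)
    filter_upwards [hev.filter_mono hmono, self_mem_nhdsWithin] with t ht ht0
    have ht0' : (0:ℝ) < t := ht0
    have : c / 2 < (D t - D 0) / (t - 0) := by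
      simpa [slope_def_field, div_eq_mul_inv, mul_comm] using ht
    rw [hD0, sub_zero, sub_zero] at this
    have h2 : c / 2 * t < D t := (lt_div_iff₀ ht0').1 this
    have : 0 < c / 2 * t := mul_pos (by linarith) ht0'
    linarith
  have hevpos' : ∀ᶠ t in nhds (0:ℝ), t ∈ Set.Ioi (0:ℝ) → 0 < D t :=
    eventually_nhdsWithin_iff.1 hevpos
  have hall : ∀ᶠ t in nhds (0:ℝ),
      (HasDerivAt φ (D t) t ∧ φ t ≤ φ 0) ∧ (t ∈ Set.Ioi (0:ℝ) → 0 < D t) :=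
    (hD.and hmax).and hevpos'
  rcases Metric.eventually_nhds_iff.1 hall with ⟨ε, hε, hball⟩
  set b := ε / 2 with hb
  have hbpos : 0 < b := by positivity
  have hkey : ∀ t ∈ Set.Icc (0:ℝ) b,
      (HasDerivAt φ (D t) t ∧ φ t ≤ φ 0) ∧ (t ∈ Set.Ioi (0:ℝ) → 0 < D t) := by
    intro t ht
    apply hball
    rw [Real.dist_eq, sub_zero, abs_of_nonneg ht.1]
    calc t ≤ b := ht.2
    _ < ε := by simp [hb]; linarith
  have hmono : StrictMonoOn φ (Set.Icc 0 b) := by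
    apply strictMonoOn_of_deriv_pos (convex_Icc 0 b)
    · intro t ht
      exact ((hkey t ht).1.1.differentiableAt.continuousAt).continuousWithinAt
    · intro t ht
      rw [interior_Icc] at ht
      have h := hkey t (Set.Ioo_subset_Icc_self ht)
      rw [h.1.1.deriv]
      exact h.2 ht.1
  have h1 : φ 0 < φ b := hmono (Set.left_mem_Icc.2 hbpos.le)
    (Set.right_mem_Icc.2 hbpos.le) hbpos
  have h2 : φ b ≤ φ 0 := (hkey b (Set.right_mem_Icc.2 hbpos.le)).1.2
  linarith

/-- Rigidity computation from Proposition 5: a nonnegative `C²` function on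
`ℝ⁶ \ {0}` that is homogeneous of degree `-2` and satisfies `Δf ≥ -f²` has
maximum `m` on the unit sphere obeying `4m ≤ m²`, so `m = 0` or `m ≥ 4`. -/
theorem cone_curvature_rigidity
    (f : EuclideanSpace ℝ (Fin 6) → ℝ)
    (hC2 : ContDiffOn ℝ 2 f {(0 : EuclideanSpace ℝ (Fin 6))}ᶜ)
    (hnn : ∀ x : EuclideanSpace ℝ (Fin 6), x ≠ 0 → 0 ≤ f x)
    (hhom : ∀ t : ℝ, 0 < t → ∀ x : EuclideanSpace ℝ (Fin 6), x ≠ 0 →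
      f (t • x) = t ^ (-2 : ℤ) * f x)
    (hineq : ∀ x : EuclideanSpace ℝ (Fin 6), x ≠ 0 → -(f x) ^ 2 ≤ laplacian f x)
    (m : ℝ) (p : EuclideanSpace ℝ (Fin 6)) (hp : ‖p‖ = 1) (hpm : f p = m)
    (hmax : ∀ x : EuclideanSpace ℝ (Fin 6), ‖x‖ = 1 → f x ≤ m) :
    4 * m ≤ m ^ 2 ∧ (m = 0 ∨ 4 ≤ m) := by
  have hp0 : p ≠ 0 := by
    intro h; rw [h] at hp; simp at hp
  have hm0 : 0 ≤ m := hpm ▸ hnn p hp0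
  -- upper bound from homogeneity
  have hub : ∀ x : EuclideanSpace ℝ (Fin 6), x ≠ 0 → f x ≤ m * (‖x‖ ^ 2)⁻¹ := by
    intro x hx
    have hnx : 0 < ‖x‖ := norm_pos_iff.2 hx
    set u := ‖x‖⁻¹ • x with hu_def
    have hu : ‖u‖ = 1 := by
      rw [hu_def, norm_smul, norm_inv, norm_norm, inv_mul_cancel₀ hnx.ne']
    have hu0 : u ≠ 0 := by
      intro h; rw [h] at hu; simp at hu
    have hux : ‖x‖ • u = x := by
      rw [hu_def, smul_smul, mul_inv_cancel₀ hnx.ne', one_smul]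
    have h1 : f x = ‖x‖ ^ (-2:ℤ) * f u := by
      calc f x = f (‖x‖ • u) := by rw [hux]
      _ = ‖x‖ ^ (-2:ℤ) * f u := hhom ‖x‖ hnx u hu0
    have h2 : (‖x‖:ℝ) ^ (-2:ℤ) = (‖x‖ ^ 2)⁻¹ := by
      rw [zpow_neg, zpow_two, ← pow_two]
    rw [h1, h2, mul_comm m _]
    exact mul_le_mul_of_nonneg_left (hmax u hu) (by positivity)
  -- key inequality for each direction
  have key : ∀ i : Fin 6,
      fderiv ℝ (fderiv ℝ f) p (EuclideanSpace.single i 1) (EuclideanSpace.single i 1)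
        ≤ m * (-2 + 8 * (p i) ^ 2) := by
    intro i
    set v : EuclideanSpace ℝ (Fin 6) := EuclideanSpace.single i (1:ℝ) with hv_def
    set L : ℝ → EuclideanSpace ℝ (Fin 6) := fun t => p + t • v with hL_def
    set q : ℝ → ℝ := fun t => 1 + 2 * p i * t + t ^ 2 with hq_def
    have hL0 : L 0 = p := by simp [hL_def]
    have hnv : ‖v‖ = 1 := by simp [hv_def]
    have hLnorm : ∀ t : ℝ, ‖L t‖ ^ 2 = q t := by
      intro t
      have hinner : inner ℝ p (t • v) = t * p i := by
        rw [real_inner_smul_right]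
        have : (inner ℝ p v : ℝ) = p i := by
          simp [hv_def, EuclideanSpace.inner_single_right]
        rw [this]
      rw [hL_def]
      simp only []
      rw [norm_add_sq_real, hinner, norm_smul, hp, hnv, Real.norm_eq_abs]
      simp [hq_def, sq_abs]
      ring
    have hLne : ∀ t : ℝ, |t| < 1 → L t ≠ 0 := by
      intro t ht
      intro h0
      have hpe : p = -(t • v) := by
        have : p + t • v = 0 := h0
        linear_combination (norm := module) this
      have : ‖p‖ = |t| := by
        rw [hpe, norm_neg, norm_smul, hnv, Real.norm_eq_abs, mul_one]
      rw [hp] at this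
      rw [← this] at ht
      exact lt_irrefl _ ht
    have hev1 : ∀ᶠ t in nhds (0:ℝ), |t| < 1 := by
      have h : Set.Ioo (-1:ℝ) 1 ∈ nhds (0:ℝ) := Ioo_mem_nhds (by norm_num) (by norm_num)
      filter_upwards [h] with t ht
      exact abs_lt.2 ⟨ht.1, ht.2⟩
    have hq0 : q 0 = 1 := by simp [hq_def]
    have hqpos : ∀ t : ℝ, |t| < 1 → 0 < q t := by
      intro t ht
      have h1 := hLnorm t
      have h2 : 0 < ‖L t‖ := norm_pos_iff.2 (hLne t ht)
      nlinarith
    have hLd : ∀ t : ℝ, HasDerivAt L v t := by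
      intro t
      have h := ((hasDerivAt_id t).smul_const v).const_add p
      simpa [hL_def] using h
    have hfC : ∀ t : ℝ, |t| < 1 → ContDiffAt ℝ 2 f (L t) := by
      intro t ht
      exact hC2.contDiffAt (isOpen_compl_singleton.mem_nhds (hLne t ht))
    have hD1 : ∀ᶠ t in nhds (0:ℝ),
        HasDerivAt (fun s => f (L s)) ((fderiv ℝ f (L t)) v) t := by
      filter_upwards [hev1] with t ht
      have hdf : DifferentiableAt ℝ f (L t) := (hfC t ht).differentiableAt (by norm_num)
      exact hdf.hasFDerivAt.comp_hasDerivAt t (hLd t)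
    have hqd : ∀ t : ℝ, HasDerivAt q (2 * p i + 2 * t) t := by
      intro t
      have h := (((hasDerivAt_id t).const_mul (2 * p i)).const_add 1).add (hasDerivAt_pow 2 t)
      exact h.congr_deriv (by simp)
    have hD2 : ∀ᶠ t in nhds (0:ℝ), HasDerivAt (fun s => m * (q s)⁻¹)
        (m * (-(2 * p i + 2 * t) / (q t) ^ 2)) t := by
      filter_upwards [hev1] with t ht
      exact ((hqd t).inv (hqpos t ht).ne').const_mul m
    set φ : ℝ → ℝ := fun t => f (L t) - m * (q t)⁻¹ with hφ_def
    set D : ℝ → ℝ := fun t =>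
      (fderiv ℝ f (L t)) v - m * (-(2 * p i + 2 * t) / (q t) ^ 2) with hD_def
    have hφd : ∀ᶠ t in nhds (0:ℝ), HasDerivAt φ (D t) t := by
      filter_upwards [hD1, hD2] with t h1 h2
      exact h1.sub h2
    have hfd2 : HasDerivAt (fun t => (fderiv ℝ f (L t)) v)
        ((fderiv ℝ (fderiv ℝ f) p) v v) 0 := by
      have h1 : ContDiffAt ℝ 2 f p := by
        have h := hfC 0 (by norm_num)
        rwa [hL0] at h
      have h1' : ContDiffAt ℝ 1 (fderiv ℝ f) p := h1.fderiv_right (by norm_num)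
      have h2 : DifferentiableAt ℝ (fderiv ℝ f) p := h1'.differentiableAt (by norm_num)
      have h2' : HasFDerivAt (fderiv ℝ f) (fderiv ℝ (fderiv ℝ f) p) (L 0) := by
        rw [hL0]; exact h2.hasFDerivAt
      have h3 : HasDerivAt (fun t => fderiv ℝ f (L t)) ((fderiv ℝ (fderiv ℝ f) p) v) 0 :=
        h2'.comp_hasDerivAt 0 (hLd 0)
      have h4 := h3.clm_apply (hasDerivAt_const 0 v)
      simpa using h4
    have hGd2 : HasDerivAt (fun t => m * (-(2 * p i + 2 * t) / (q t) ^ 2))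
        (m * (-2 + 8 * (p i) ^ 2)) 0 := by
      have hu : HasDerivAt (fun t : ℝ => -(2 * p i + 2 * t)) (-2) 0 := by
        have h := (((hasDerivAt_id (0:ℝ)).const_mul 2).const_add (2 * p i)).neg
        exact h.congr_deriv (by simp)
      have hw := (hqd 0).pow 2
      have hwne : (q 0) ^ 2 ≠ 0 := by rw [hq0]; norm_num
      have hdiv := (hu.div hw hwne).const_mul m
      refine hdiv.congr_deriv ?_
      simp only [Pi.pow_apply, hq0]
      push_cast
      ring
    have hDd : HasDerivAt D
        ((fderiv ℝ (fderiv ℝ f) p) v v - m * (-2 + 8 * (p i) ^ 2)) 0 :=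
      hfd2.sub hGd2
    have hφmax : IsLocalMax φ 0 := by
      have hφ0 : φ 0 = 0 := by
        simp [hφ_def, hL0, hq0, hpm]
      rw [IsLocalMax, IsMaxFilter]
      filter_upwards [hev1] with t ht
      have h1 : f (L t) ≤ m * (‖L t‖ ^ 2)⁻¹ := hub (L t) (hLne t ht)
      rw [hLnorm t] at h1
      rw [hφ0]
      simp only [hφ_def]
      linarith
    have hfin := second_deriv_nonpos_of_isLocalMax hφd hDd hφmax
    linarith
  have hlap : laplacian f p ≤ -(4 * m) := by
    have hsum : laplacian f p = ∑ i : Fin 6,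
        fderiv ℝ (fderiv ℝ f) p (EuclideanSpace.single i 1) (EuclideanSpace.single i 1) := by
      unfold laplacian
      congr 1; ext i
      rw [iteratedFDeriv_two_apply]
      simp
    have hsq : ∑ i : Fin 6, (p i) ^ 2 = 1 := by
      have h1 : ‖p‖ ^ 2 = 1 := by rw [hp]; norm_num
      rw [EuclideanSpace.norm_eq,
        Real.sq_sqrt (Finset.sum_nonneg fun i _ => sq_nonneg _)] at h1
      simpa [Real.norm_eq_abs, sq_abs] using h1
    calc laplacian f p
        = ∑ i : Fin 6, fderiv ℝ (fderiv ℝ f) p (EuclideanSpace.single i 1)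
            (EuclideanSpace.single i 1) := hsum
      _ ≤ ∑ i : Fin 6, m * (-2 + 8 * (p i) ^ 2) := Finset.sum_le_sum (fun i _ => key i)
      _ = m * (-12 + 8 * ∑ i : Fin 6, (p i) ^ 2) := by
          rw [← Finset.mul_sum]
          congr 1
          rw [Finset.sum_add_distrib, Finset.sum_const, ← Finset.mul_sum]
          simp
          ring
      _ = -(4 * m) := by rw [hsq]; ring
  have h4m : 4 * m ≤ m ^ 2 := by
    have h := hineq p hp0
    rw [hpm] at h
    linarith
  refine ⟨h4m, ?_⟩
  rcases eq_or_lt_of_le hm0 with h | h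
  · exact Or.inl h.symm
  · right
    have hmm : 4 * m ≤ m * m := by rw [← pow_two]; exact h4m
    exact le_of_mul_le_mul_right hmm h
end
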